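/- Let φ : G → Fin k be a perfect coloring of H with parameter matrix A such that φ((y·z)·(y·z)·v) = φ(v) for every v ∈ X. Then for every u ∈ G the map ψ : G → Fin k defined by ψ(v) = φ(y·z·v) if v ∈ u·X and ψ(v) = φ(v) if v ∉ u·X is again a perfect coloring of H with the same parameter matrix A. -/

import Mathlib

namespace HexGrid

/-- Relations of the hexagonal grid group: x² = y² = z² = (x·y·z)² = 1. -/
def hexRels : Set (FreeGroup (Fin 3)) :=
  {FreeGroup.of 0 * FreeGroup.of 0,
   FreeGroup.of 1 * FreeGroup.of 1,
   FreeGroup.of 2 * FreeGroup.of 2,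
   FreeGroup.of 0 * FreeGroup.of 1 * FreeGroup.of 2 *
     (FreeGroup.of 0 * FreeGroup.of 1 * FreeGroup.of 2)}

/-- The group `G = ⟨x, y, z ∣ x² = y² = z² = (x·y·z)² = 1⟩`. -/
abbrev G := PresentedGroup hexRels

/-- The generators of `G`. -/
def gen (i : Fin 3) : G := PresentedGroup.of i

def x : G := gen 0
def y : G := gen 1
def z : G := gen 2

lemma gen_mul_self (i : Fin 3) : gen i * gen i = 1 := by
  have h : FreeGroup.of i * FreeGroup.of i ∈ Subgroup.normalClosure hexRels :=
    Subgroup.subset_normalClosure (by fin_cases i <;> simp [hexRels])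
  exact (QuotientGroup.eq_one_iff _).mpr h

/-- The infinite hexagonal grid `H`: the Cayley graph of `G` with respect to `{x, y, z}`;
`u` and `v` are adjacent iff `v ∈ {u·x, u·y, u·z}`. -/
def H : SimpleGraph G where
  Adj u v := u ≠ v ∧ ∃ i : Fin 3, v = u * gen i
  symm := by
    constructor
    rintro u v ⟨hne, i, rfl⟩
    exact ⟨hne.symm, i, by rw [mul_assoc, gen_mul_self, mul_one]⟩
  loopless := by constructor; rintro u ⟨hne, -⟩; exact hne rfl

/-- `φ` is a perfect coloring of `H` with parameter matrix `A`: for every vertex `u` and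
every color `j`, the number of neighbors of `u` in `H` colored `j` equals `A (φ u) j`. -/
def IsPerfectColoring {k : ℕ} (φ : G → Fin k) (A : Matrix (Fin k) (Fin k) ℕ) : Prop :=
  ∀ u : G, ∀ j : Fin k, Set.ncard {v : G | H.Adj u v ∧ φ v = j} = A (φ u) j

/-- A matrix is tridiagonal if its entries vanish whenever the indices differ by more
than one. -/
def IsTridiagonal {k : ℕ} (A : Matrix (Fin k) (Fin k) ℕ) : Prop :=
  ∀ i j : Fin k, ((i : ℕ) + 1 < (j : ℕ) ∨ (j : ℕ) + 1 < (i : ℕ)) → A i j = 0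

/-- Two colorings are equivalent if one is obtained from the other by composing with a
graph automorphism of `H`. -/
def EquivColoring {k : ℕ} (φ ψ : G → Fin k) : Prop :=
  ∃ g : H ≃g H, ψ = fun v => φ (g v)

/-- The double (zigzag) line `X = {(y·z)ⁿ : n ∈ ℤ} ∪ {(y·z)ⁿ·x : n ∈ ℤ}`. -/
def Xline : Set G := {g : G | ∃ n : ℤ, g = (y * z) ^ n ∨ g = (y * z) ^ n * x}

/- ---- basic relations ---- -/

lemma xyzsq : (x*y*z)*(x*y*z) = 1 := by
  have h : (FreeGroup.of 0 * FreeGroup.of 1 * FreeGroup.of 2) *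
      (FreeGroup.of 0 * FreeGroup.of 1 * FreeGroup.of 2) ∈ Subgroup.normalClosure hexRels :=
    Subgroup.subset_normalClosure (by simp [hexRels])
  exact (QuotientGroup.eq_one_iff _).mpr h

lemma xx : x*x = 1 := gen_mul_self 0
lemma yy : y*y = 1 := gen_mul_self 1
lemma zz : z*z = 1 := gen_mul_self 2
lemma gen_inv (i : Fin 3) : (gen i)⁻¹ = gen i := inv_eq_of_mul_eq_one_right (gen_mul_self i)
lemma x_inv : x⁻¹ = x := gen_inv 0
lemma y_inv : y⁻¹ = y := gen_inv 1
lemma z_inv : z⁻¹ = z := gen_inv 2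

lemma yz_inv : (y*z)⁻¹ = z*y := by rw [mul_inv_rev, y_inv, z_inv]
lemma zy_inv : (z*y)⁻¹ = y*z := by rw [mul_inv_rev, y_inv, z_inv]
lemma xy_inv : (x*y)⁻¹ = y*x := by rw [mul_inv_rev, x_inv, y_inv]

lemma xyzx : x*(y*z)*x = z*y := by
  have h1 : (x*(y*z)*x)*(y*z) = 1 := by
    rw [show (x*(y*z)*x)*(y*z) = (x*y*z)*(x*y*z) from by group]; exact xyzsq
  have h2 : (z*y)*(y*z) = 1 := by
    rw [show (z*y)*(y*z) = z*(y*y)*z from by group, yy, mul_one, zz]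
  exact mul_right_cancel (h1.trans h2.symm)

lemma xzyx : x*(z*y)*x = y*z := by
  rw [← xyzx, show x*(x*(y*z)*x)*x = (x*x)*(y*z)*(x*x) from by group, xx, one_mul, mul_one]

lemma zxyz : z*(x*y)*z = y*x := by
  have h1 : ((z*(x*y)*z)*(x*y))*z = z := by
    rw [show ((z*(x*y)*z)*(x*y))*z = z*((x*y*z)*(x*y*z)) from by group, xyzsq, mul_one]
  have h2 : (((y*x)*(x*y))*z) = z := by
    rw [show ((y*x)*(x*y)) = y*(x*x)*y from by group, xx, mul_one, yy, one_mul]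
  exact mul_right_cancel (mul_right_cancel (h1.trans h2.symm))

lemma conj_gen_yz (i : Fin 3) : gen i * (y*z) * gen i = z*y := by
  fin_cases i
  · exact xyzx
  · show y*(y*z)*y = z*y
    rw [show y*(y*z)*y = (y*y)*(z*y) from by group, yy, one_mul]
  · show z*(y*z)*z = z*y
    rw [show z*(y*z)*z = (z*y)*(z*z) from by group, zz, mul_one]

lemma conj_gen_xy (i : Fin 3) : gen i * (x*y) * gen i = y*x := by
  fin_cases i
  · show x*(x*y)*x = y*x
    rw [show x*(x*y)*x = (x*x)*(y*x) from by group, xx, one_mul]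
  · show y*(x*y)*y = y*x
    rw [show y*(x*y)*y = (y*x)*(y*y) from by group, yy, mul_one]
  · exact zxyz

lemma conj_zpow_eq {u a b : G} (h : u * a * u⁻¹ = b) (m : ℤ) : u * a^m = b^m * u := by
  have h2 : u * a^m * u⁻¹ = b^m := by rw [← conj_zpow, h]
  rw [show u * a^m = (u * a^m * u⁻¹) * u from by group, h2]

lemma gen_flip_yz (i : Fin 3) (m : ℤ) : gen i * (y*z)^m = (y*z)^(-m) * gen i := by
  have h : gen i * (y*z) * (gen i)⁻¹ = z*y := by rw [gen_inv]; exact conj_gen_yz i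
  have h2 : ((z*y : G))^m = (y*z)^(-m) := by
    rw [show (z*y:G) = (y*z)⁻¹ from yz_inv.symm, inv_zpow, ← zpow_neg]
  rw [conj_zpow_eq h m, h2]

lemma gen_flip_xy (i : Fin 3) (m : ℤ) : gen i * (x*y)^m = (x*y)^(-m) * gen i := by
  have h : gen i * (x*y) * (gen i)⁻¹ = y*x := by rw [gen_inv]; exact conj_gen_xy i
  have h2 : ((y*x : G))^m = (x*y)^(-m) := by
    rw [show (y*x:G) = (x*y)⁻¹ from xy_inv.symm, inv_zpow, ← zpow_neg]
  rw [conj_zpow_eq h m, h2]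

lemma x_flip (m : ℤ) : x * (y*z)^m = (y*z)^(-m) * x := gen_flip_yz 0 m
lemma y_flip (m : ℤ) : y * (y*z)^m = (y*z)^(-m) * y := gen_flip_yz 1 m
lemma z_flip (m : ℤ) : z * (y*z)^m = (y*z)^(-m) * z := gen_flip_yz 2 m
lemma x_flip_xy (m : ℤ) : x * (x*y)^m = (x*y)^(-m) * x := gen_flip_xy 0 m
lemma y_flip_xy (m : ℤ) : y * (x*y)^m = (x*y)^(-m) * y := gen_flip_xy 1 m
lemma z_flip_xy (m : ℤ) : z * (x*y)^m = (x*y)^(-m) * z := gen_flip_xy 2 m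
lemma zy_zpow_neg_one : (z*y : G) = (y*z)^(-1:ℤ) := by rw [zpow_neg_one, yz_inv]

lemma x_yz : x*(y*z) = (z*y)*x := by
  rw [show x*(y*z) = x*(y*z)*(x*x) from by rw [xx, mul_one],
    show x*(y*z)*(x*x) = (x*(y*z)*x)*x from by group, xyzx]

lemma x_zy : x*(z*y) = (y*z)*x := by
  rw [show x*(z*y) = x*(z*y)*(x*x) from by rw [xx, mul_one],
    show x*(z*y)*(x*x) = (x*(z*y)*x)*x from by group, xzyx]

/- ---- generation / induction ---- -/

lemma word_inv : ∀ L : List (Fin 3), ((L.map gen).prod)⁻¹ = ((L.reverse.map gen).prod) := by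
  intro L
  induction L with
  | nil => simp
  | cons i L ih => simp [mul_inv_rev, ih, gen_inv]

lemma exists_word (g : G) : ∃ L : List (Fin 3), g = (L.map gen).prod := by
  let S : Subgroup G :=
    { carrier := {g | ∃ L : List (Fin 3), g = (L.map gen).prod}
      one_mem' := ⟨[], rfl⟩
      mul_mem' := by rintro a b ⟨L1, rfl⟩ ⟨L2, rfl⟩; exact ⟨L1 ++ L2, by simp⟩
      inv_mem' := by rintro a ⟨L, rfl⟩; exact ⟨L.reverse, word_inv L⟩ }
  exact PresentedGroup.generated_by hexRels S (fun j => ⟨[j], by simp [gen]⟩) g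

lemma par (u : G) : u * (y*z) * u⁻¹ = y*z ∨ u * (y*z) * u⁻¹ = z*y := by
  have zyconj : ∀ a : G, (a*(y*z)*a⁻¹)⁻¹ = a*(z*y)*a⁻¹ := fun a => by
    rw [show (z*y : G) = (y*z)⁻¹ from yz_inv.symm]; group
  let S : Subgroup G :=
    { carrier := {g | g * (y*z) * g⁻¹ = y*z ∨ g * (y*z) * g⁻¹ = z*y}
      one_mem' := Or.inl (by group)
      mul_mem' := by
        intro a b ha hb
        have key : (a*b)*(y*z)*(a*b)⁻¹ = a*(b*(y*z)*b⁻¹)*a⁻¹ := by group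
        rcases hb with hb | hb
        · rcases ha with ha | ha
          · exact Or.inl (by rw [key, hb, ha])
          · exact Or.inr (by rw [key, hb, ha])
        · have hzy : a*(z*y)*a⁻¹ = z*y ∨ a*(z*y)*a⁻¹ = y*z := by
            rcases ha with ha | ha
            · exact Or.inl (by rw [← zyconj a, ha, yz_inv])
            · exact Or.inr (by rw [← zyconj a, ha, zy_inv])
          rcases hzy with h | h
          · exact Or.inr (by rw [key, hb, h])
          · exact Or.inl (by rw [key, hb, h])
      inv_mem' := by
        intro a ha
        rcases ha with ha | ha
        · left
          have h : (y*z) = a⁻¹*(a*(y*z)*a⁻¹)*a⁻¹⁻¹ := by group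
          rw [ha] at h; exact h.symm
        · right
          have hi : a*(z*y)*a⁻¹ = y*z := by rw [← zyconj a, ha, zy_inv]
          have h : (z*y) = a⁻¹*(a*(z*y)*a⁻¹)*a⁻¹⁻¹ := by group
          rw [hi] at h; exact h.symm }
  exact PresentedGroup.generated_by hexRels S
    (fun j => Or.inr (by show gen j * (y*z) * (gen j)⁻¹ = z*y; rw [gen_inv]; exact conj_gen_yz j)) u

/- ---- sign homomorphisms ---- -/

lemma relsq : ∀ r ∈ hexRels, ∃ w : FreeGroup (Fin 3), r = w * w := by
  intro r hr
  simp only [hexRels, Set.mem_insert_iff, Set.mem_singleton_iff] at hr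
  rcases hr with rfl | rfl | rfl | rfl <;> exact ⟨_, rfl⟩

def sgn (f : Fin 3 → ℤˣ) : G →* ℤˣ :=
  PresentedGroup.toGroup (f := f) (by
    intro r hr
    obtain ⟨w, rfl⟩ := relsq r hr
    rw [map_mul]
    exact Int.units_mul_self _)

lemma sgn_gen (f : Fin 3 → ℤˣ) (i : Fin 3) : sgn f (gen i) = f i :=
  PresentedGroup.toGroup.of _

def δh : G →* ℤˣ := sgn (fun i => if i = 0 then 1 else -1)

lemma δh_x : δh x = 1 := by show δh (gen 0) = 1; rw [δh, sgn_gen]; rfl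
lemma δh_y : δh y = -1 := by show δh (gen 1) = -1; rw [δh, sgn_gen]; rfl
lemma δh_z : δh z = -1 := by show δh (gen 2) = -1; rw [δh, sgn_gen]; rfl

lemma gen_ne_one (i : Fin 3) : gen i ≠ 1 := by
  intro h
  have h2 := congrArg (sgn (fun j => if j = i then -1 else 1)) h
  rw [sgn_gen, map_one] at h2
  simp at h2

lemma gen_ne (i j : Fin 3) (hij : i ≠ j) : gen i ≠ gen j := by
  intro h
  have h2 := congrArg (sgn (fun l => if l = i then -1 else 1)) h
  rw [sgn_gen, sgn_gen, if_pos rfl, if_neg hij.symm] at h2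
  simp at h2

lemma x_ne_y : x ≠ y := gen_ne 0 1 (by decide)
lemma x_ne_z : x ≠ z := gen_ne 0 2 (by decide)
lemma y_ne_z : y ≠ z := gen_ne 1 2 (by decide)

/- ---- Xline lemmas ---- -/

lemma one_mem_X : (1 : G) ∈ Xline := ⟨0, Or.inl (by group)⟩

lemma tX_x {t : G} (ht : t ∈ Xline) : t * x ∈ Xline := by
  obtain ⟨n, h | h⟩ := ht
  · exact ⟨n, Or.inr (by rw [h])⟩
  · exact ⟨n, Or.inl (by rw [h, mul_assoc, xx, mul_one])⟩

lemma tX_yz {t : G} (ht : t ∈ Xline) : t * (y*z) ∈ Xline := by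
  obtain ⟨n, h | h⟩ := ht
  · exact ⟨n+1, Or.inl (by rw [h, mul_zpow_self])⟩
  · refine ⟨n-1, Or.inr ?_⟩
    rw [h, mul_assoc, x_yz, ← mul_assoc, show (z*y:G) = (y*z)⁻¹ from yz_inv.symm,
      ← zpow_sub_one]

lemma tX_zy {t : G} (ht : t ∈ Xline) : t * (z*y) ∈ Xline := by
  obtain ⟨n, h | h⟩ := ht
  · refine ⟨n-1, Or.inl ?_⟩
    rw [h, show (z*y:G) = (y*z)⁻¹ from yz_inv.symm, ← zpow_sub_one]
  · refine ⟨n+1, Or.inr ?_⟩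
    rw [h, mul_assoc, x_zy, ← mul_assoc, mul_zpow_self]

lemma xX {t : G} (ht : t ∈ Xline) : x * t ∈ Xline := by
  obtain ⟨n, h | h⟩ := ht
  · exact ⟨-n, Or.inr (by rw [h, x_flip])⟩
  · exact ⟨-n, Or.inl (by rw [h, ← mul_assoc, x_flip, mul_assoc, xx, mul_one])⟩

lemma zyX {t : G} (ht : t ∈ Xline) : (z*y) * t ∈ Xline := by
  obtain ⟨n, h | h⟩ := ht
  · refine ⟨n-1, Or.inl ?_⟩
    rw [h, zy_zpow_neg_one, ← zpow_add, show (-1 + n : ℤ) = n - 1 from by omega]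
  · refine ⟨n-1, Or.inr ?_⟩
    rw [h, zy_zpow_neg_one, ← mul_assoc, ← zpow_add,
      show (-1 + n : ℤ) = n - 1 from by omega]

/- ---- stack decomposition ---- -/

lemma stackX (g : G) : ∃ (m : ℤ) (t : G), t ∈ Xline ∧ g = (x*y)^m * t := by
  obtain ⟨L, rfl⟩ := exists_word g
  induction L with
  | nil => exact ⟨0, 1, one_mem_X, by rw [List.map_nil, List.prod_nil]; group⟩
  | cons i L ih =>
    obtain ⟨m, t, ht, hprod⟩ := ih
    rw [List.map_cons, List.prod_cons, hprod]
    fin_cases i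
    · exact ⟨-m, x * t, xX ht, by
        show x * ((x*y)^m * t) = (x*y)^(-m) * (x*t)
        rw [← mul_assoc, x_flip_xy, mul_assoc]⟩
    · refine ⟨-m-1, x*t, xX ht, ?_⟩
      show y * ((x*y)^m * t) = (x*y)^(-m-1) * (x*t)
      have e1 : y * ((x*y)^m * t) = (x*y)^(-m) * (y * t) := by
        rw [← mul_assoc, y_flip_xy, mul_assoc]
      have e2 : ((x*y) : G)⁻¹ * (x*t) = y*t := by
        rw [xy_inv, show (y*x)*(x*t) = y*((x*x)*t) from by group, xx, one_mul]
      rw [e1, ← e2, ← mul_assoc, show ((x*y) : G)⁻¹ = (x*y)^(-1:ℤ) from (zpow_neg_one _).symm,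
        ← zpow_add, show (-m + -1 : ℤ) = -m-1 from by omega]
    · refine ⟨-m-1, (z*y)*(x*t), zyX (xX ht), ?_⟩
      show z * ((x*y)^m * t) = (x*y)^(-m-1) * ((z*y)*(x*t))
      have e1 : z * ((x*y)^m * t) = (x*y)^(-m) * (z * t) := by
        rw [← mul_assoc, z_flip_xy, mul_assoc]
      have e2 : ((x*y) : G)⁻¹ * ((z*y)*(x*t)) = z*t := by
        rw [xy_inv, show (y*x)*((z*y)*(x*t)) = y*((x*(z*y)*x)*t) from by group, xzyx,
          show y*((y*z)*t) = (y*y)*(z*t) from by group, yy, one_mul]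
      rw [e1, ← e2, ← mul_assoc, show ((x*y) : G)⁻¹ = (x*y)^(-1:ℤ) from (zpow_neg_one _).symm,
        ← zpow_add, show (-m + -1 : ℤ) = -m-1 from by omega]

/- ---- coset lemmas ---- -/

lemma coset_x {u w : G} (h : w ∈ (fun t => u * t) '' Xline) :
    w * x ∈ (fun t => u * t) '' Xline := by
  obtain ⟨t, ht, rfl⟩ := h
  exact ⟨t * x, tX_x ht, (mul_assoc u t x).symm⟩

lemma coset_x_rev {u w : G} (h : w * x ∈ (fun t => u * t) '' Xline) :
    w ∈ (fun t => u * t) '' Xline := by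
  have h2 := coset_x h
  rwa [mul_assoc, xx, mul_one] at h2

lemma coset_yz {u w : G} (h : w ∈ (fun t => u * t) '' Xline) :
    w * (y*z) ∈ (fun t => u * t) '' Xline := by
  obtain ⟨t, ht, rfl⟩ := h
  exact ⟨t * (y*z), tX_yz ht, (mul_assoc u t (y*z)).symm⟩

lemma coset_zy {u w : G} (h : w ∈ (fun t => u * t) '' Xline) :
    w * (z*y) ∈ (fun t => u * t) '' Xline := by
  obtain ⟨t, ht, rfl⟩ := h
  exact ⟨t * (z*y), tX_zy ht, (mul_assoc u t (z*y)).symm⟩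

lemma coset_of_y {u w : G} (h : w * y ∈ (fun t => u * t) '' Xline) :
    w * z ∈ (fun t => u * t) '' Xline := by
  have h2 := coset_yz h
  rwa [show (w*y)*(y*z) = w*((y*y)*z) from by group, yy, one_mul] at h2

lemma coset_of_z {u w : G} (h : w * z ∈ (fun t => u * t) '' Xline) :
    w * y ∈ (fun t => u * t) '' Xline := by
  have h2 := coset_zy h
  rwa [show (w*z)*(z*y) = w*((z*z)*y) from by group, zz, one_mul] at h2

lemma delta_coset {u w : G} (h : w ∈ (fun t => u * t) '' Xline) : δh w = δh u := by
  obtain ⟨t, ⟨n, ht | ht⟩, rfl⟩ := h <;> subst ht <;>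
    simp [map_mul, map_zpow, δh_x, δh_y, δh_z]

lemma coset_y_not {u w : G} (h : w ∈ (fun t => u * t) '' Xline) :
    w * y ∉ (fun t => u * t) '' Xline := by
  intro h2
  have e1 := delta_coset h
  have e2 := delta_coset h2
  rw [map_mul, δh_y, e1] at e2
  have : (-1 : ℤˣ) = 1 := mul_left_cancel (e2.trans (mul_one (δh u)).symm)
  exact absurd this (by decide)

lemma coset_z_not {u w : G} (h : w ∈ (fun t => u * t) '' Xline) :
    w * z ∉ (fun t => u * t) '' Xline := by
  intro h2
  have e1 := delta_coset h
  have e2 := delta_coset h2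
  rw [map_mul, δh_z, e1] at e2
  have : (-1 : ℤˣ) = 1 := mul_left_cancel (e2.trans (mul_one (δh u)).symm)
  exact absurd this (by decide)

/- ---- counting machinery ---- -/

lemma adj_iff {w v : G} : H.Adj w v ↔ (v = w * x ∨ v = w * y ∨ v = w * z) := by
  constructor
  · rintro ⟨hne, i, rfl⟩
    fin_cases i
    · exact Or.inl rfl
    · exact Or.inr (Or.inl rfl)
    · exact Or.inr (Or.inr rfl)
  · rintro (rfl | rfl | rfl)
    · exact ⟨fun h => gen_ne_one 0 (left_eq_mul.mp h), 0, rfl⟩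
    · exact ⟨fun h => gen_ne_one 1 (left_eq_mul.mp h), 1, rfl⟩
    · exact ⟨fun h => gen_ne_one 2 (left_eq_mul.mp h), 2, rfl⟩

lemma count_triple {β : Type*} [DecidableEq β] (j p q r : β) :
    Multiset.count j ({p, q, r} : Multiset β) =
      (if p = j then 1 else 0) + ((if q = j then 1 else 0) + (if r = j then 1 else 0)) := by
  have e : ∀ a : β, (if j = a then (1:ℕ) else 0) = (if a = j then 1 else 0) := by
    intro a
    by_cases h : a = j
    · simp [h]
    · rw [if_neg (fun hh => h hh.symm), if_neg h]
  show Multiset.count j (p ::ₘ q ::ₘ {r}) = _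
  rw [Multiset.count_cons, Multiset.count_cons, Multiset.count_singleton, e, e, e]
  ring

lemma count_formula {k : ℕ} (χ : G → Fin k) (w : G) (j : Fin k) :
    Set.ncard {v : G | H.Adj w v ∧ χ v = j} =
      Multiset.count j ({χ (w*x), χ (w*y), χ (w*z)} : Multiset (Fin k)) := by
  classical
  have hxy : w*x ≠ w*y := fun h => x_ne_y (mul_left_cancel h)
  have hxz : w*x ≠ w*z := fun h => x_ne_z (mul_left_cancel h)
  have hyz : w*y ≠ w*z := fun h => y_ne_z (mul_left_cancel h)
  have hset : {v : G | H.Adj w v ∧ χ v = j} =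
      ↑(({w*x, w*y, w*z} : Finset G).filter (fun v => χ v = j)) := by
    ext v
    simp only [Set.mem_setOf_eq, adj_iff, Finset.coe_filter, Finset.mem_insert,
      Finset.mem_singleton]
  rw [hset, Set.ncard_coe_finset, Finset.card_filter,
    Finset.sum_insert (by simp [hxy, hxz]),
    Finset.sum_insert (by simp [hyz]), Finset.sum_singleton, count_triple]

def PC {k : ℕ} (φ : G → Fin k) (A : Matrix (Fin k) (Fin k) ℕ) : Prop :=
  ∀ w : G, ∀ j : Fin k,
    Multiset.count j ({φ (w*x), φ (w*y), φ (w*z)} : Multiset (Fin k)) = A (φ w) j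

lemma perfect_iff {k : ℕ} (χ : G → Fin k) (A : Matrix (Fin k) (Fin k) ℕ) :
    IsPerfectColoring χ A ↔ PC χ A :=
  forall₂_congr fun w j => by rw [count_formula]

lemma tripleEq {k : ℕ} {φ : G → Fin k} {A : Matrix (Fin k) (Fin k) ℕ} (hp : PC φ A)
    {w w' : G} (h : φ w = φ w') :
    ({φ (w*x), φ (w*y), φ (w*z)} : Multiset (Fin k)) = {φ (w'*x), φ (w'*y), φ (w'*z)} :=
  Multiset.ext.mpr fun j => by rw [hp w j, hp w' j, h]

lemma cons_cancel {β : Type*} {a b : β} {s : Multiset β} (h : a ::ₘ s = b ::ₘ s) : a = b := by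
  rw [← Multiset.singleton_add, ← Multiset.singleton_add] at h
  exact Multiset.singleton_inj.mp (add_right_cancel h)

lemma pair_eq {β : Type*} {a b c d : β} (h : ({a, b} : Multiset β) = {c, d}) :
    (a = c ∧ b = d) ∨ (a = d ∧ b = c) := by
  rcases Multiset.cons_eq_cons.mp h with ⟨h1, h2⟩ | ⟨h1, m, h2, h3⟩
  · exact Or.inl ⟨h1, Multiset.singleton_inj.mp h2⟩
  · obtain ⟨hbc, hm⟩ := (Multiset.singleton_eq_cons_iff _).mp h2
    subst hm
    have h4 : ({d} : Multiset β) = {a} := h3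
    exact Or.inr ⟨(Multiset.singleton_inj.mp h4).symm, hbc⟩

lemma cseq {k : ℕ} {c : ℤ → Fin k}
    (h : ∀ n : ℤ, ({c n, c (n-1)} : Multiset (Fin k)) = {c (n+2), c (n+1)}) :
    ∀ n : ℤ, c (n+2) = c n := by
  intro n
  rcases pair_eq (h n) with ⟨h1, _⟩ | ⟨h1, h2⟩
  · exact h1.symm
  · have h3 := h (n+1)
    rw [show (n+1-1 : ℤ) = n from by omega, show (n+1+2 : ℤ) = n+3 from by omega,
      show (n+1+1 : ℤ) = n+2 from by omega] at h3
    rcases pair_eq h3 with ⟨g1, g2⟩ | ⟨g1, g2⟩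
    · exact g2.symm
    · exact g1.symm.trans h1.symm

/- ---- periodicity propagation ---- -/

def PerRows {k : ℕ} (φ : G → Fin k) (u : G) : Prop :=
  ∀ n : ℤ, φ (u * (y*z)^(n+2)) = φ (u * (y*z)^n) ∧
    φ (u * (y*z)^(n+2) * x) = φ (u * (y*z)^n * x)

lemma zpow_split (a : G) (n : ℤ) : a^n = a^(n-1) * a := by
  rw [mul_zpow_self, sub_add_cancel]

lemma step {k : ℕ} {φ : G → Fin k} {A : Matrix (Fin k) (Fin k) ℕ} (hp : PC φ A)
    {u : G} (h : PerRows φ u) : PerRows φ (u * y) := by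
  have pa : ∀ n : ℤ, φ (u * (y*z)^(n+2)) = φ (u * (y*z)^n) := fun n => (h n).1
  have pb : ∀ n : ℤ, φ (u * (y*z)^(n+2) * x) = φ (u * (y*z)^n * x) := fun n => (h n).2
  have idz : ∀ n : ℤ, u * (y*z)^n * z = u * (y*z)^(n-1) * y := by
    intro n
    rw [zpow_split (y*z) n,
      show u * ((y*z)^(n-1)*(y*z)) * z = u * (y*z)^(n-1) * (y*(z*z)) from by group,
      zz, mul_one]
  have idy : ∀ n : ℤ, u * (y*z)^n * y * y = u * (y*z)^n := by
    intro n; rw [mul_assoc, yy, mul_one]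
  have idhz : ∀ n : ℤ, u * (y*z)^n * y * z = u * (y*z)^(n+1) := by
    intro n
    rw [show u * (y*z)^n * y * z = u * ((y*z)^n * (y*z)) from by group, mul_zpow_self]
  have pairEq : ∀ n : ℤ, ({φ (u*(y*z)^n*y), φ (u*(y*z)^(n-1)*y)} : Multiset (Fin k)) =
      {φ (u*(y*z)^(n+2)*y), φ (u*(y*z)^(n+1)*y)} := by
    intro n
    have t := tripleEq hp (pa n).symm
    rw [idz n, idz (n+2), show (n+2-1 : ℤ) = n+1 from by omega, pb n] at t
    exact (Multiset.cons_inj_right _).mp t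
  have per_c : ∀ n : ℤ, φ (u*(y*z)^(n+2)*y) = φ (u*(y*z)^n*y) :=
    cseq (c := fun n => φ (u*(y*z)^n*y)) pairEq
  have po : ∀ n : ℤ, φ (u*(y*z)^(n+2)*y*x) = φ (u*(y*z)^n*y*x) := by
    intro n
    have t := tripleEq hp (per_c n)
    rw [idy n, idy (n+2), idhz n, idhz (n+2), show (n+2+1 : ℤ) = n+1+2 from by omega,
      pa n, pa (n+1)] at t
    exact cons_cancel t
  have idconj : ∀ m : ℤ, u * y * (y*z)^m = u * (y*z)^(-m) * y := by
    intro m; rw [mul_assoc, y_flip, ← mul_assoc]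
  intro n
  constructor
  · rw [idconj (n+2), idconj n, show (-(n+2) : ℤ) = -n-2 from by omega]
    have h5 := per_c (-n-2)
    rw [show (-n-2+2 : ℤ) = -n from by omega] at h5
    exact h5.symm
  · rw [idconj (n+2), idconj n, show (-(n+2) : ℤ) = -n-2 from by omega]
    have h6 := po (-n-2)
    rw [show (-n-2+2 : ℤ) = -n from by omega] at h6
    exact h6.symm

lemma perx {k : ℕ} {φ : G → Fin k} {u : G} (h : PerRows φ u) : PerRows φ (u * x) := by
  have idc : ∀ m : ℤ, u * x * (y*z)^m = u * (y*z)^(-m) * x := by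
    intro m; rw [mul_assoc, x_flip, ← mul_assoc]
  have idc2 : ∀ m : ℤ, u * x * (y*z)^m * x = u * (y*z)^(-m) := by
    intro m; rw [idc m, mul_assoc, xx, mul_one]
  intro n
  constructor
  · rw [idc (n+2), idc n, show (-(n+2) : ℤ) = -n-2 from by omega]
    have h5 := (h (-n-2)).2
    rw [show (-n-2+2 : ℤ) = -n from by omega] at h5
    exact h5.symm
  · rw [idc2 (n+2), idc2 n, show (-(n+2) : ℤ) = -n-2 from by omega]
    have h5 := (h (-n-2)).1
    rw [show (-n-2+2 : ℤ) = -n from by omega] at h5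
    exact h5.symm

lemma base {k : ℕ} {φ : G → Fin k}
    (hX : ∀ v ∈ Xline, φ ((y * z) * (y * z) * v) = φ v) : PerRows φ 1 := by
  intro n
  constructor
  · have h := hX ((y*z)^n) ⟨n, Or.inl rfl⟩
    rw [mul_assoc, mul_self_zpow, mul_self_zpow, show (n+1+1 : ℤ) = n+2 from by omega] at h
    rw [one_mul, one_mul]
    exact h
  · have h := hX ((y*z)^n * x) ⟨n, Or.inr rfl⟩
    rw [← mul_assoc, mul_assoc (y*z) (y*z) ((y*z)^n), mul_self_zpow, mul_self_zpow,
      show (n+1+1 : ℤ) = n+2 from by omega] at h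
    rw [one_mul, one_mul]
    exact h

lemma qm {k : ℕ} {φ : G → Fin k} {A : Matrix (Fin k) (Fin k) ℕ} (hp : PC φ A)
    (hX : ∀ v ∈ Xline, φ ((y * z) * (y * z) * v) = φ v) :
    ∀ m : ℤ, PerRows φ ((x*y)^m) := by
  intro m
  induction m using Int.induction_on with
  | zero => rw [show ((x*y)^(0:ℤ) : G) = 1 from zpow_zero _]; exact base hX
  | succ i ih =>
    have h1 := step hp (perx ih)
    rw [show ((x*y)^(i:ℤ) * x * y : G) = (x*y)^((i:ℤ)+1) from by
      rw [mul_assoc, mul_zpow_self]] at h1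
    exact h1
  | pred i ih =>
    have h1 := perx (step hp ih)
    rw [show ((x*y)^(-(i:ℤ)) * y * x : G) = (x*y)^(-(i:ℤ)-1) from by
      rw [mul_assoc, show (y*x : G) = (x*y)⁻¹ from xy_inv.symm, ← zpow_sub_one]] at h1
    exact h1

lemma comm2 {a u s : G} (e0 : a*u = u*s) (t' : G) : a*(a*(u*t')) = u*(s*(s*t')) := by
  rw [show a*(a*(u*t')) = a*((a*u)*t') from by group, e0,
    show a*((u*s)*t') = (a*u)*(s*t') from by group, e0, mul_assoc]

lemma gp {k : ℕ} {φ : G → Fin k} {A : Matrix (Fin k) (Fin k) ℕ} (hp : PC φ A)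
    (hX : ∀ v ∈ Xline, φ ((y * z) * (y * z) * v) = φ v) :
    ∀ w : G, φ ((y*z)*(y*z)*w) = φ w := by
  intro w
  obtain ⟨m, t, ht, rfl⟩ := stackX w
  have hq := qm hp hX m
  have hyz2 : ∀ n : ℤ, (y*z)*((y*z)*(y*z)^n) = (y*z)^(n+2) := by
    intro n; rw [mul_self_zpow, mul_self_zpow, show (n+1+1:ℤ) = n+2 from by omega]
  have hzy2 : ∀ n : ℤ, (z*y)*((z*y)*(y*z)^n) = (y*z)^(n-2) := by
    intro n
    rw [zy_zpow_neg_one,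
      show ((y*z):G)^(-1:ℤ)*(y*z)^n = (y*z)^(n-1) from by rw [← zpow_add]; congr 1; omega,
      show ((y*z):G)^(-1:ℤ)*(y*z)^(n-1) = (y*z)^(n-2) from by rw [← zpow_add]; congr 1; omega]
  have e0 : (y*z)*(x*y)^m = (x*y)^m * (((x*y)^m)⁻¹*(y*z)*((x*y)^m)⁻¹⁻¹) := by group
  rcases par ((x*y)^m)⁻¹ with hc | hc <;> rw [hc] at e0 <;>
    (obtain ⟨n, ht | ht⟩ := ht <;> subst ht)
  · rw [show (y*z)*(y*z)*((x*y)^m*(y*z)^n) = (y*z)*((y*z)*((x*y)^m*(y*z)^n)) from by group,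
      comm2 e0, hyz2]
    exact (hq n).1
  · rw [show (y*z)*(y*z)*((x*y)^m*((y*z)^n*x)) = (y*z)*((y*z)*((x*y)^m*((y*z)^n*x))) from by
        group,
      comm2 e0, show (y*z)*((y*z)*((y*z)^n*x)) = ((y*z)*((y*z)*(y*z)^n))*x from by group,
      hyz2, ← mul_assoc, ← mul_assoc]
    exact (hq n).2
  · rw [show (y*z)*(y*z)*((x*y)^m*(y*z)^n) = (y*z)*((y*z)*((x*y)^m*(y*z)^n)) from by group,
      comm2 e0, hzy2]
    have h7 := (hq (n-2)).1
    rw [show (n-2+2:ℤ) = n from by omega] at h7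
    exact h7.symm
  · rw [show (y*z)*(y*z)*((x*y)^m*((y*z)^n*x)) = (y*z)*((y*z)*((x*y)^m*((y*z)^n*x))) from by
        group,
      comm2 e0, show (z*y)*((z*y)*((y*z)^n*x)) = ((z*y)*((z*y)*(y*z)^n))*x from by group,
      hzy2, ← mul_assoc, ← mul_assoc]
    have h7 := (hq (n-2)).2
    rw [show (n-2+2:ℤ) = n from by omega] at h7
    exact h7.symm

lemma swapClaim {k : ℕ} {φ : G → Fin k}
    (hgp : ∀ w : G, φ ((y*z)*(y*z)*w) = φ w) (w : G) :
    ({φ ((y*z)*(w*y)), φ ((y*z)*(w*z))} : Multiset (Fin k)) = {φ (w*y), φ (w*z)} := by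
  have e0 : (y*z)*w = w*(w⁻¹*(y*z)*w⁻¹⁻¹) := by group
  rcases par w⁻¹ with hc | hc <;> rw [hc] at e0
  · have h1 : (y*z)*(w*z) = w*y := by
      rw [show (y*z)*(w*z) = ((y*z)*w)*z from by group, e0,
        show (w*(y*z))*z = w*(y*(z*z)) from by group, zz, mul_one]
    have h3 : φ ((y*z)*(w*y)) = φ (w*z) := by
      rw [show (y*z)*(w*y) = (y*z)*((y*z)*(w*z)) from by rw [h1],
        show (y*z)*((y*z)*(w*z)) = (y*z)*(y*z)*(w*z) from by group]
      exact hgp (w*z)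
    rw [h3, h1]
    exact Multiset.pair_comm _ _
  · have h1 : (y*z)*(w*y) = w*z := by
      rw [show (y*z)*(w*y) = ((y*z)*w)*y from by group, e0,
        show (w*(z*y))*y = w*(z*(y*y)) from by group, yy, mul_one]
    have h3 : φ ((y*z)*(w*z)) = φ (w*y) := by
      rw [show (y*z)*(w*z) = (y*z)*((y*z)*(w*y)) from by rw [h1],
        show (y*z)*((y*z)*(w*y)) = (y*z)*(y*z)*(w*y) from by group]
      exact hgp (w*y)
    rw [h3, h1]
    exact Multiset.pair_comm _ _

/-- Shifting a `(y·z)²`-periodic perfect coloring by `y·z` on a left coset `u·X` yields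
another perfect coloring with the same parameter matrix. -/
theorem shifted_coloring_is_perfect {k : ℕ} (φ : G → Fin k) (A : Matrix (Fin k) (Fin k) ℕ)
    (hφ : IsPerfectColoring φ A)
    (hX : ∀ v ∈ Xline, φ ((y * z) * (y * z) * v) = φ v)
    (u : G) (ψ : G → Fin k)
    (hin : ∀ v ∈ (fun t => u * t) '' Xline, ψ v = φ ((y * z) * v))
    (hout : ∀ v ∉ (fun t => u * t) '' Xline, ψ v = φ v) :
    IsPerfectColoring ψ A := by
  classical
  have hp : PC φ A := (perfect_iff φ A).mp hφ
  have hgp := gp hp hX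
  refine (perfect_iff ψ A).mpr ?_
  intro w j
  by_cases hw : w ∈ (fun t => u * t) '' Xline
  · have hwx := coset_x hw
    have hwy := coset_y_not hw
    have hwz := coset_z_not hw
    rw [hin _ hwx, hout _ hwy, hout _ hwz, hin _ hw]
    have key := hp ((y*z)*w) j
    have em : ({φ ((y*z)*(w*x)), φ (w*y), φ (w*z)} : Multiset (Fin k)) =
        {φ ((y*z)*w*x), φ ((y*z)*w*y), φ ((y*z)*w*z)} := by
      rw [show ((y*z)*w*x : G) = (y*z)*(w*x) from mul_assoc _ _ _,
        show ((y*z)*w*y : G) = (y*z)*(w*y) from mul_assoc _ _ _,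
        show ((y*z)*w*z : G) = (y*z)*(w*z) from mul_assoc _ _ _]
      exact congrArg (Multiset.cons (φ ((y*z)*(w*x)))) (swapClaim hgp w).symm
    rw [em]
    exact key
  · by_cases hwy : w * y ∈ (fun t => u * t) '' Xline
    · have hwz := coset_of_y hwy
      have hwx : w * x ∉ (fun t => u * t) '' Xline := fun h => hw (coset_x_rev h)
      rw [hout _ hwx, hin _ hwy, hin _ hwz, hout _ hw]
      have em : ({φ (w*x), φ ((y*z)*(w*y)), φ ((y*z)*(w*z))} : Multiset (Fin k)) =
          {φ (w*x), φ (w*y), φ (w*z)} :=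
        congrArg (Multiset.cons (φ (w*x))) (swapClaim hgp w)
      rw [em]
      exact hp w j
    · have hwz : w * z ∉ (fun t => u * t) '' Xline := fun h => hwy (coset_of_z h)
      have hwx : w * x ∉ (fun t => u * t) '' Xline := fun h => hw (coset_x_rev h)
      rw [hout _ hwx, hout _ hwy, hout _ hwz, hout _ hw]
      exact hp w j

end HexGrid
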